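/- Let P be a finite abelian p-group and H an abelian subgroup of Aut(P) whose order is coprime to p. If H acts indecomposably on P, then H is cyclic and C_P(h) is trivial for every h ∈ H with h ≠ 1 (i.e. every non-identity element of H has no non-trivial fixed points in P). -/

import Mathlib

/-- A subgroup `H` of `Aut(P)` acts indecomposably on `P` if there is no internal direct
product decomposition `P = P₁ × P₂` with `P₁`, `P₂` both non-trivial and both invariant
under every element of `H`. -/
def ActsIndecomposably {P : Type*} [Group P] (S : Set (MulAut P)) : Prop :=
  ¬ ∃ P₁ P₂ : Subgroup P, P₁ ≠ ⊥ ∧ P₂ ≠ ⊥ ∧ P₁ ⊓ P₂ = ⊥ ∧ P₁ ⊔ P₂ = ⊤ ∧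
      (∀ f ∈ S, ∀ x ∈ P₁, f x ∈ P₁) ∧ (∀ f ∈ S, ∀ x ∈ P₂, f x ∈ P₂)

lemma aux_prod_shift {P : Type} [CommGroup P] (γ : MulAut P) {q : ℕ} (hq : γ ^ q = 1) (x : P) :
    ∏ i ∈ Finset.range q, (γ ^ (i + 1)) x = ∏ i ∈ Finset.range q, (γ ^ i) x := by
  have h1 := Finset.prod_range_succ' (fun i => (γ ^ i) x) q
  have h2 := Finset.prod_range_succ (fun i => (γ ^ i) x) q
  simp only [pow_zero, MulAut.one_apply, hq] at h1 h2
  exact mul_right_cancel (h1.symm.trans h2)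

lemma aux_norm_fix {P : Type} [CommGroup P] (γ : MulAut P) {q : ℕ} (hq : γ ^ q = 1) (x : P) :
    γ (∏ i ∈ Finset.range q, (γ ^ i) x) = ∏ i ∈ Finset.range q, (γ ^ i) x := by
  rw [map_prod]
  rw [show (fun i => γ ((γ ^ i) x)) = fun i => (γ ^ (i + 1)) x from funext fun i => by
    rw [pow_succ', MulAut.mul_apply]]
  exact aux_prod_shift γ hq x

lemma aux_norm_one {P : Type} [CommGroup P] (γ : MulAut P) {q : ℕ} (hq : γ ^ q = 1)
    (hfix : ∀ x : P, γ x = x → x = 1) (x : P) :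
    ∏ i ∈ Finset.range q, (γ ^ i) x = 1 :=
  hfix _ (aux_norm_fix γ hq x)

lemma aux_fixed_trivial (p : ℕ) (hp : p.Prime) (P : Type) [CommGroup P] [Finite P]
    (hP : IsPGroup p P) (H : Subgroup (MulAut P))
    (hab : ∀ a ∈ H, ∀ b ∈ H, a * b = b * a)
    (hcop : Nat.Coprime (Nat.card H) p)
    (hind : ActsIndecomposably (H : Set (MulAut P))) :
    ∀ h ∈ H, h ≠ 1 → ∀ x : P, h x = x → x = 1 := by
  intro h hhH hne
  set n := Nat.card H with hn
  have hpow : h ^ n = 1 := by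
    have h1 : (⟨h, hhH⟩ : H) ^ n = 1 := pow_card_eq_one'
    have := congrArg (Subtype.val) h1
    simpa using this
  haveI : Fact p.Prime := ⟨hp⟩
  obtain ⟨k, hk⟩ := IsPGroup.iff_card.mp hP
  have hcop' : Nat.Coprime n (Nat.card P) := by
    rw [hk]; exact hcop.pow_right k
  -- the endomorphism x ↦ h x / x
  set f : P →* P := MonoidHom.mk' (fun x => h x / x)
    (fun a b => by simp [map_mul, mul_div_mul_comm]) with hf
  have hfapp : ∀ x : P, f x = h x / x := fun x => rfl
  set K := f.ker with hK
  set R := f.range with hR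
  have hmemK : ∀ x : P, x ∈ K ↔ h x = x := by
    intro x
    rw [hK, MonoidHom.mem_ker, hfapp, div_eq_one]
  -- norm
  set N : P → P := fun x => ∏ i ∈ Finset.range n, (h ^ i) x with hN
  have hNK : ∀ x : P, N x ∈ K := by
    intro x
    rw [hmemK]
    exact aux_norm_fix h hpow x
  have hNfix : ∀ x : P, h x = x → N x = x ^ n := by
    intro x hx
    have : ∀ i : ℕ, (h ^ i) x = x := by
      intro i
      induction i with
      | zero => simp
      | succ i ih => rw [pow_succ, MulAut.mul_apply, hx, ih]
    simp [hN, this]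
  have hNrange : ∀ y : P, N (f y) = 1 := by
    intro y
    have : ∀ i : ℕ, (h ^ i) (f y) = (h ^ (i + 1)) y / (h ^ i) y := by
      intro i
      rw [hfapp, map_div, pow_succ, MulAut.mul_apply]
    rw [hN]
    simp only [this]
    rw [Finset.prod_div_distrib, aux_prod_shift h hpow, div_self']
  have hNdiv : ∀ x : P, N x / x ^ n ∈ R := by
    intro x
    have h1 : ∀ i : ℕ, (h ^ i) x / x ∈ R := by
      intro i
      induction i with
      | zero => simp [one_mem]
      | succ i ih =>
        have : (h ^ (i + 1)) x / x = f ((h ^ i) x) * ((h ^ i) x / x) := by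
          rw [hfapp, pow_succ', MulAut.mul_apply]
          exact (div_mul_div_cancel _ _ _).symm
        rw [this]
        exact mul_mem ⟨(h ^ i) x, rfl⟩ ih
    have : N x / x ^ n = ∏ i ∈ Finset.range n, ((h ^ i) x / x) := by
      rw [Finset.prod_div_distrib, Finset.prod_const, Finset.card_range]
    rw [this]
    exact prod_mem fun i _ => h1 i
  -- x^n = 1 → x = 1
  have hpowinj : ∀ x : P, x ^ n = 1 → x = 1 := by
    intro x hx
    have h1 : orderOf x ∣ n := orderOf_dvd_of_pow_eq_one hx
    have h2 : orderOf x ∣ Nat.card P := orderOf_dvd_natCard x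
    have := Nat.dvd_gcd h1 h2
    rw [Nat.Coprime.gcd_eq_one hcop'] at this
    exact orderOf_eq_one_iff.mp (Nat.dvd_one.mp this)
  have hinf : K ⊓ R = ⊥ := by
    rw [eq_bot_iff]
    rintro x ⟨hxK, hxR⟩
    obtain ⟨y, hy⟩ := hxR
    have h1 : N x = 1 := by rw [← hy]; exact hNrange y
    have h2 : N x = x ^ n := hNfix x ((hmemK x).mp hxK)
    rw [Subgroup.mem_bot]
    exact hpowinj x (h2.symm.trans h1)
  have hsup : K ⊔ R = ⊤ := by
    rcases subsingleton_or_nontrivial P with hPs | hPn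
    · apply Subsingleton.elim
    have hsup' : ∀ x : P, x ^ n ∈ K ⊔ R := by
      intro x
      have : x ^ n = N x * (N x / x ^ n)⁻¹ := by
        rw [inv_div, mul_div_assoc', mul_div_cancel_left]
      rw [this]
      exact mul_mem ((le_sup_left : K ≤ K ⊔ R) (hNK x))
        (inv_mem ((le_sup_right : R ≤ K ⊔ R) (hNdiv x)))
    rw [eq_top_iff]
    intro z _
    have hcard1 : 1 < Nat.card P := Finite.one_lt_card_iff_nontrivial.mpr hPn
    obtain ⟨m, -, hm⟩ := Nat.exists_mul_mod_eq_one_of_coprime hcop' hcard1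
    have : z = (z ^ m) ^ n := by
      rw [← pow_mul, mul_comm m n]
      conv_rhs => rw [← Nat.div_add_mod (n * m) (Nat.card P), hm]
      rw [pow_add, pow_mul, pow_card_eq_one', one_pow, one_mul, pow_one]
    rw [this]
    exact hsup' _
  have hinvK : ∀ g ∈ (H : Set (MulAut P)), ∀ x ∈ K, g x ∈ K := by
    intro g hg x hx
    rw [hmemK] at hx ⊢
    have hc := hab g hg h hhH
    calc h (g x) = (h * g) x := rfl
    _ = (g * h) x := by rw [← hc]
    _ = g (h x) := rfl
    _ = g x := by rw [hx]
  have hinvR : ∀ g ∈ (H : Set (MulAut P)), ∀ x ∈ R, g x ∈ R := by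
    rintro g hg x ⟨y, hy⟩
    refine ⟨g y, ?_⟩
    have hc := hab g hg h hhH
    rw [hfapp] at hy ⊢
    rw [← hy, map_div]
    congr 1
    calc h (g y) = (h * g) y := rfl
    _ = (g * h) y := by rw [← hc]
    _ = g (h y) := rfl
  have hRne : R ≠ ⊥ := by
    intro hR0
    apply hne
    ext x
    have : f x ∈ R := ⟨x, rfl⟩
    rw [hR0, Subgroup.mem_bot, hfapp, div_eq_one] at this
    simpa using this
  have hKbot : K = ⊥ := by
    by_contra hK0
    exact hind ⟨K, R, hK0, hRne, hinf, hsup, hinvK, hinvR⟩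
  intro x hx
  have : x ∈ K := (hmemK x).mpr hx
  rw [hKbot, Subgroup.mem_bot] at this
  exact this

lemma aux_prime_torsion (p : ℕ) (hp : p.Prime) (P : Type) [CommGroup P] [Finite P]
    [Nontrivial P] (hP : IsPGroup p P) (H : Subgroup (MulAut P)) [Fintype H] [DecidableEq H]
    (hab : ∀ a ∈ H, ∀ b ∈ H, a * b = b * a)
    (hcop : Nat.Coprime (Nat.card H) p)
    (hfix : ∀ h ∈ H, h ≠ 1 → ∀ x : P, h x = x → x = 1)
    (q : ℕ) (hq : q.Prime) :
    (Finset.univ.filter fun a : H => a ^ q = 1).card ≤ q := by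
  haveI : Fact q.Prime := ⟨hq⟩
  by_contra hc
  have hlt : q < (Finset.univ.filter fun a : H => a ^ q = 1).card := not_le.mp hc
  set F := Finset.univ.filter fun a : H => a ^ q = 1 with hF
  obtain ⟨a, haF, hane⟩ := Finset.exists_mem_ne (lt_trans hq.one_lt hlt) 1
  have haq : a ^ q = 1 := (Finset.mem_filter.mp haF).2
  have haord : orderOf a = q := orderOf_eq_prime haq hane
  set A : Finset H := (Finset.range q).image (a ^ ·) with hA
  have hAcard : A.card ≤ q := le_trans Finset.card_image_le (by simp)
  have hnsub : ¬ F ⊆ A := fun hsub => absurd (Finset.card_le_card hsub) (by omega)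
  obtain ⟨b, hbF, hbA⟩ := Finset.not_subset.mp hnsub
  have hbq : b ^ q = 1 := (Finset.mem_filter.mp hbF).2
  have hbne : b ≠ 1 := by
    intro hb
    apply hbA
    rw [hb]
    exact Finset.mem_image.mpr ⟨0, Finset.mem_range.mpr hq.pos, pow_zero a⟩
  have hbord : orderOf b = q := orderOf_eq_prime hbq hbne
  set u : MulAut P := (a : MulAut P) with hu
  set v : MulAut P := (b : MulAut P) with hv
  have huH : u ∈ H := a.2
  have hvH : v ∈ H := b.2
  have huq : u ^ q = 1 := by
    have := congrArg Subtype.val haq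
    simpa using this
  have hvq : v ^ q = 1 := by
    have := congrArg Subtype.val hbq
    simpa using this
  have hvord : orderOf v = q := by
    rw [hv, ← hbord]
    exact orderOf_injective H.subtype H.subtype_injective b
  have hune : u ≠ 1 := by
    intro h0
    apply hane
    apply Subtype.ext
    rw [← hu, h0]
    simp
  have hcommC : Commute u v := hab u huH v hvH
  have hvpow_ne : ∀ i, 0 < i → i < q → v ^ i ≠ 1 := by
    intro i hi0 hiq hvi
    have hd := orderOf_dvd_of_pow_eq_one hvi
    rw [hvord] at hd
    exact absurd (Nat.le_of_dvd hi0 hd) (not_le.mpr hiq)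
  have hmodpow : ∀ M : ℕ, u ^ M = u ^ (M % q) := by
    intro M
    conv_lhs => rw [← Nat.div_add_mod M q]
    rw [pow_add, pow_mul, huq, one_pow, one_mul]
  have huvne : ∀ j, j < q → u * v ^ j ≠ 1 := by
    intro j hj h0
    rcases Nat.eq_zero_or_pos j with rfl | hj0
    · rw [pow_zero, mul_one] at h0
      exact hune h0
    have hj1 : v ^ j = u⁻¹ := eq_inv_of_mul_eq_one_right h0
    have hcopjq : Nat.Coprime j q :=
      (hq.coprime_iff_not_dvd.mpr (fun hd => absurd (Nat.le_of_dvd hj0 hd) (not_le.mpr hj))).symm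
    obtain ⟨c, -, hcc⟩ := Nat.exists_mul_mod_eq_one_of_coprime hcopjq hq.one_lt
    have hjc : j * c = q * (j * c / q) + 1 := by
      conv_lhs => rw [← Nat.div_add_mod (j * c) q, hcc]
    have hv1 : v = (v ^ j) ^ c := by
      rw [← pow_mul, hjc, pow_add, pow_mul, hvq, one_pow, one_mul, pow_one]
    have huinv : u⁻¹ = u ^ (q - 1) := by
      have h1 : u ^ (q - 1) * u = 1 := by
        rw [← pow_succ, Nat.sub_add_cancel hq.one_le, huq]
      exact (eq_inv_of_mul_eq_one_left h1).symm
    have hvu : v = u ^ ((q - 1) * c % q) := by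
      rw [hv1, hj1, huinv, ← pow_mul, hmodpow]
    apply hbA
    have hbval : b = a ^ ((q - 1) * c % q) := by
      apply Subtype.ext
      rw [SubmonoidClass.coe_pow]
      exact hvu
    rw [hbval]
    exact Finset.mem_image.mpr ⟨_, Finset.mem_range.mpr (Nat.mod_lt _ hq.pos), rfl⟩
  have hLv : ∀ i, 0 < i → i < q → ∀ x : P, ∏ j ∈ Finset.range q, ((v ^ i) ^ j) x = 1 := by
    intro i hi0 hiq x
    exact aux_norm_one (v ^ i) (by rw [pow_right_comm, hvq, one_pow])
      (hfix _ (pow_mem hvH i) (hvpow_ne i hi0 hiq)) x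
  have hLuv : ∀ j, j < q → ∀ x : P, ∏ i ∈ Finset.range q, ((u * v ^ j) ^ i) x = 1 := by
    intro j hj x
    refine aux_norm_one _ ?_ (hfix _ (mul_mem huH (pow_mem hvH j)) (huvne j hj)) x
    rw [(hcommC.pow_right j).mul_pow, huq, pow_right_comm, hvq, one_pow, one_mul]
  have hxq : ∀ x : P, x ^ q = 1 := by
    intro x
    have T1 : ∏ j ∈ Finset.range q, ∏ i ∈ Finset.range q, ((u * v ^ j) ^ i) x = 1 :=
      Finset.prod_eq_one fun j hj => hLuv j (Finset.mem_range.mp hj) x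
    have hterm : ∀ i j : ℕ, ((u * v ^ j) ^ i) x = (u ^ i) (((v ^ i) ^ j) x) := by
      intro i j
      rw [(hcommC.pow_right j).mul_pow, pow_right_comm v j i, MulAut.mul_apply]
    have T2 : ∏ j ∈ Finset.range q, ∏ i ∈ Finset.range q, ((u * v ^ j) ^ i) x = x ^ q := by
      simp only [hterm]
      rw [Finset.prod_comm]
      rw [Finset.prod_eq_single_of_mem 0 (Finset.mem_range.mpr hq.pos) ?_]
      · simp
      · intro i hi hi0
        rw [← map_prod, hLv i (Nat.pos_of_ne_zero hi0) (Finset.mem_range.mp hi) x, map_one]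
    rw [T2] at T1
    exact T1
  obtain ⟨x₀, hx₀⟩ := exists_ne (1 : P)
  apply hx₀
  have hordq : orderOf x₀ ∣ q := orderOf_dvd_of_pow_eq_one (hxq x₀)
  obtain ⟨k2, hk2⟩ := hP x₀
  have hordp : orderOf x₀ ∣ p ^ k2 := orderOf_dvd_of_pow_eq_one hk2
  have hqH : q ∣ Nat.card H := by rw [← haord]; exact orderOf_dvd_natCard a
  have hcq : Nat.Coprime q (p ^ k2) := (Nat.Coprime.coprime_dvd_left hqH hcop).pow_right k2
  have h1 : orderOf x₀ ∣ 1 := hcq ▸ Nat.dvd_gcd hordq hordp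
  exact orderOf_eq_one_iff.mp (Nat.dvd_one.mp h1)

/-- Let `P` be a finite abelian `p`-group and `H` an abelian subgroup of `Aut(P)` whose
order is coprime to `p`.  If `H` acts indecomposably on `P`, then `H` is cyclic and
`C_P(h)` is trivial for every `h ∈ H` with `h ≠ 1`, i.e. every non-identity element of `H`
has no non-trivial fixed points in `P`. -/
theorem stmt8 (p : ℕ) (hp : p.Prime) (P : Type) [CommGroup P] [Finite P]
    (hP : IsPGroup p P) (H : Subgroup (MulAut P))
    (hab : ∀ a ∈ H, ∀ b ∈ H, a * b = b * a)
    (hcop : Nat.Coprime (Nat.card H) p)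
    (hind : ActsIndecomposably (H : Set (MulAut P))) :
    IsCyclic H ∧ ∀ h ∈ H, h ≠ 1 → ∀ x : P, h x = x → x = 1 := by
  have key : ∀ h ∈ H, h ≠ 1 → ∀ x : P, h x = x → x = 1 :=
    aux_fixed_trivial p hp P hP H hab hcop hind
  refine ⟨?_, key⟩
  rcases subsingleton_or_nontrivial P with hPs | hPn
  · haveI : Subsingleton (MulAut P) := ⟨fun f g => by ext x; exact Subsingleton.elim _ _⟩
    haveI : Subsingleton H := ⟨fun f g => Subtype.ext (Subsingleton.elim _ _)⟩
    infer_instance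
  haveI : Finite (MulAut P) :=
    Finite.of_injective (fun g : MulAut P => (g : P → P)) DFunLike.coe_injective
  haveI : Fintype H := Fintype.ofFinite H
  letI : DecidableEq H := Classical.decEq H
  letI : CommGroup H :=
    { (inferInstance : Group H) with
      mul_comm := fun a b => Subtype.ext (hab a a.2 b b.2) }
  have hprime : ∀ q : ℕ, q.Prime →
      (Finset.univ.filter fun a : H => a ^ q = 1).card ≤ q :=
    aux_prime_torsion p hp P hP H hab hcop key
  have hall : ∀ n : ℕ, 0 < n → (Finset.univ.filter fun a : H => a ^ n = 1).card ≤ n := by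
    intro n
    induction n using Nat.strong_induction_on with
    | _ n ih =>
      intro hn
      rcases eq_or_ne n 1 with rfl | hn1
      · have hsub : (Finset.univ.filter fun a : H => a ^ 1 = 1) ⊆ {1} := by
          intro a ha
          simp only [Finset.mem_filter, Finset.mem_univ, true_and, pow_one] at ha
          simpa using ha
        exact le_trans (Finset.card_le_card hsub) (by simp)
      · set q := n.minFac with hqdef
        have hqp : q.Prime := Nat.minFac_prime hn1
        have hqd : q ∣ n := n.minFac_dvd
        set m := n / q with hmdef
        have hqm : q * m = n := Nat.mul_div_cancel' hqd
        have hm0 : 0 < m := Nat.div_pos (Nat.minFac_le hn) hqp.pos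
        have hmn : m < n := Nat.div_lt_self hn hqp.one_lt
        set s := Finset.univ.filter fun a : H => a ^ n = 1 with hs
        have himg : s.image (· ^ q) ⊆ Finset.univ.filter fun a : H => a ^ m = 1 := by
          intro b hb
          obtain ⟨x, hx, rfl⟩ := Finset.mem_image.mp hb
          rw [hs, Finset.mem_filter] at hx
          simp only [Finset.mem_filter, Finset.mem_univ, true_and]
          rw [← pow_mul, hqm]
          exact hx.2
        have hbound : s.card ≤ q * (s.image (· ^ q)).card := by
          apply Finset.card_le_mul_card_image
          intro b hb
          obtain ⟨x₀, hx₀s, hx₀⟩ := Finset.mem_image.mp hb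
          have hx₀n : x₀ ^ n = 1 := (Finset.mem_filter.mp hx₀s).2
          calc (s.filter fun a => a ^ q = b).card
              ≤ (Finset.univ.filter fun a : H => a ^ q = 1).card := by
                apply Finset.card_le_card_of_injOn (fun a => a * x₀⁻¹)
                · intro a ha
                  obtain ⟨has, haq⟩ := Finset.mem_filter.mp ha
                  simp only [Finset.mem_coe, Finset.mem_filter, Finset.mem_univ, true_and]
                  rw [mul_pow, inv_pow, hx₀, haq, mul_inv_cancel]
                · intro a1 _ a2 _ h12
                  exact mul_right_cancel h12
            _ ≤ q := hprime q hqp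
        calc s.card ≤ q * (s.image (· ^ q)).card := hbound
          _ ≤ q * m := Nat.mul_le_mul_left q
              (le_trans (Finset.card_le_card himg) (ih m hmn hm0))
          _ = n := hqm
  exact isCyclic_of_card_pow_eq_one_le hall
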